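/- arXiv:2501.05138 — 3 statements merged into one kernel-verified Lean document; each statement's English description precedes it below -/
import Mathlib

section
/- Let ≽ and ≽' be binary relations on a type α such that ≽' is a specificity refinement of ≽. Then for every set r ⊆ α, Best_{≻'}(r) ⊆ Best_{≻}(r), where ≻ and ≻' denote the strict parts of ≽ and ≽' respectively. (Paper's Lemma 2: Best_{≻_{XS}}(r) ⊆ Best_{≻_X}(r) for any t-relation r.) -/
/-- The strict part of a weak preference relation. -/
def strictPart {α : Type*} (R : α → α → Prop) (a b : α) : Prop :=
  R a b ∧ ¬ R b a

/-- The Best operator: elements of `r` not strictly dominated by any element of `r`. -/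
def Best {α : Type*} (P : α → α → Prop) (r : Set α) : Set α :=
  {a ∈ r | ¬ ∃ b ∈ r, P b a}

/-- `R'` is a specificity refinement of `R`. -/
def SpecRefinement {α : Type*} (R R' : α → α → Prop) : Prop :=
  (∀ a b, R' a b → R a b) ∧ (∀ a b, R a b → ¬ R' a b → R b a)

theorem stmt_0 {α : Type*} (R R' : α → α → Prop)
    (h : SpecRefinement R R') (r : Set α) :
    Best (strictPart R') r ⊆ Best (strictPart R) r := by
  rintro a ⟨har, hnd⟩
  refine ⟨har, fun ⟨b, hbr, hba, hab⟩ => hnd ⟨b, hbr, ?_, fun h' => hab (h.1 a b h')⟩⟩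
  by_contra hb'
  exact hab (h.2 b a hba hb')
end

section
/- Let ≽ be a transitive binary relation on a type α, and let ≽' be a specificity refinement of ≽. Then the strict part of ≽ is contained in the strict part of Relation.TransGen ≽': for all a, b, if a ≽ b and ¬(b ≽ a), then Relation.TransGen ≽' a b and ¬(Relation.TransGen ≽' b a). (Paper's Proposition 1: ≻_{XT} ⊆ ≻_{XTST} for any initial preference relation.) -/
lemma transGen_sub {α : Type*} {R R' : α → α → Prop} (htrans : Transitive R)
    (hsub : ∀ a b, R' a b → R a b) {x y : α} (h : Relation.TransGen R' x y) : R x y := by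
  induction h with
  | single h1 => exact hsub _ _ h1
  | tail _ h2 ih => exact htrans ih (hsub _ _ h2)

theorem stmt_4 {α : Type*} (R R' : α → α → Prop)
    (htrans : Transitive R) (h : SpecRefinement R R') :
    ∀ a b, R a b → ¬ R b a →
      (Relation.TransGen R' a b ∧ ¬ Relation.TransGen R' b a) := by
  intro a b hab hnba
  have hR'ab : R' a b := by
    by_contra hn
    exact hnba (h.2 a b hab hn)
  exact ⟨Relation.TransGen.single hR'ab,
    fun htg => hnba (transGen_sub htrans h.1 htg)⟩
end

section
/- Let ≽ be a transitive binary relation on a type α, and let ≽' be a specificity refinement of ≽. Then for every set r ⊆ α, Best computed with the strict part of Relation.TransGen ≽' is contained in Best computed with the strict part of ≽: Best_{strict(Relation.TransGen ≽')}(r) ⊆ Best_{strict(≽)}(r). (Consequence of the paper's Proposition 1: applying S and then T to a transitively closed preference relation leads to smaller, i.e., cleaner, Best results.) -/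
theorem stmt_5 {α : Type*} (R R' : α → α → Prop)
    (htrans : Transitive R) (h : SpecRefinement R R') (r : Set α) :
    Best (strictPart (Relation.TransGen R')) r ⊆ Best (strictPart R) r := by
  intro a ha
  obtain ⟨har, hnd⟩ := ha
  refine ⟨har, ?_⟩
  rintro ⟨b, hbr, hRba, hnRab⟩
  have hR'ba : R' b a := by
    by_contra hn
    exact hnRab (h.2 b a hRba hn)
  have hsub : ∀ x y, Relation.TransGen R' x y → R x y := by
    intro x y hxy
    induction hxy with
    | single hxy => exact h.1 _ _ hxy
    | tail _ hxy ih => exact htrans ih (h.1 _ _ hxy)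
  exact hnd ⟨b, hbr, Relation.TransGen.single hR'ba,
    fun hab => hnRab (hsub _ _ hab)⟩
end
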